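/- Perfect conjugate-domain value iteration for linear systems: let f(x,u) = A x + B u with A ∈ ℝ^{n×n} invertible, stage cost C(x,u) = C_i(u) depending only on u with C_i proper, and J : ℝ^n → (-∞, ∞] proper. Define T[J](x) = inf_u { C_i(u) + J(Ax + Bu) }. Then the conjugate of T[J] satisfies (T[J])*(y) = C_i*(-B^T A^{-T} y) + J*(A^{-T} y) for all y ∈ ℝ^n. -/

import Mathlib

lemma my_neg_iInf {ι : Sort*} (f : ι → EReal) : -(⨅ x, f x) = ⨆ x, -(f x) := by
  apply le_antisymm
  · rw [EReal.neg_le]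
    exact le_iInf fun x => EReal.neg_le.mp (le_iSup (fun x => -(f x)) x)
  · exact iSup_le fun x => EReal.neg_le_neg_iff.mpr (iInf_le f x)

lemma my_add_iSup {ι : Sort*} [Nonempty ι] (c : EReal) (f : ι → EReal) :
    c + (⨆ x, f x) = ⨆ x, c + f x := by
  apply le_antisymm
  · refine EReal.add_le_of_forall_lt fun a ha b hb => ?_
    obtain ⟨x, hx⟩ := lt_iSup_iff.mp hb
    exact le_iSup_of_le x (add_le_add ha.le hx.le)
  · exact iSup_le fun x => add_le_add_right (le_iSup f x) c

lemma my_sub_iInf {ι : Sort*} [Nonempty ι] (c : EReal) (f : ι → EReal) :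
    c - (⨅ x, f x) = ⨆ x, c - f x := by
  rw [sub_eq_add_neg, my_neg_iInf, my_add_iSup]
  simp_rw [sub_eq_add_neg]

lemma my_iSup_add_iSup {ι κ : Sort*} [Nonempty ι] [Nonempty κ]
    (f : ι → EReal) (g : κ → EReal) :
    (⨆ x, f x) + (⨆ y, g y) = ⨆ x, ⨆ y, f x + g y := by
  apply le_antisymm
  · refine EReal.add_le_of_forall_lt fun a ha b hb => ?_
    obtain ⟨x, hx⟩ := lt_iSup_iff.mp ha
    obtain ⟨z, hz⟩ := lt_iSup_iff.mp hb
    exact le_iSup_of_le x (le_iSup_of_le z (add_le_add hx.le hz.le))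
  · exact iSup_le fun x => iSup_le fun z =>
      add_le_add (le_iSup f x) (le_iSup g z)

lemma my_sub_add (r s : ℝ) (a b : EReal) (ha : a ≠ ⊥) (hb : b ≠ ⊥) :
    ((r + s : ℝ) : EReal) - (a + b) = ((r : EReal) - a) + ((s : EReal) - b) := by
  induction a with
  | bot => exact absurd rfl ha
  | top =>
    rw [EReal.top_add_of_ne_bot hb, EReal.sub_top, EReal.sub_top, EReal.bot_add]
  | coe a =>
    induction b with
    | bot => exact absurd rfl hb
    | top =>
      rw [EReal.add_top_of_ne_bot (EReal.coe_ne_bot a), EReal.sub_top, EReal.sub_top,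
        EReal.add_bot]
    | coe b =>
      norm_cast
      ring

/-- Perfect conjugate-domain value iteration for linear systems:
for `f(x,u) = Ax + Bu` with `A` invertible and stage cost `C_i(u)`,
the conjugate of `T[J](x) = inf_u { C_i(u) + J(Ax + Bu) }` satisfies
`(T[J])*(y) = C_i*(-Bᵀ A⁻ᵀ y) + J*(A⁻ᵀ y)`. -/
theorem conjugate_value_iteration_linear {n m : ℕ}
    (A : EuclideanSpace ℝ (Fin n) ≃L[ℝ] EuclideanSpace ℝ (Fin n))
    (B : EuclideanSpace ℝ (Fin m) →L[ℝ] EuclideanSpace ℝ (Fin n))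
    (Ci : EuclideanSpace ℝ (Fin m) → EReal)
    (hCiproper : ∃ u, Ci u ≠ ⊤) (hCibot : ∀ u, Ci u ≠ ⊥)
    (J : EuclideanSpace ℝ (Fin n) → EReal)
    (hJproper : ∃ z, J z ≠ ⊤) (hJbot : ∀ z, J z ≠ ⊥)
    (y : EuclideanSpace ℝ (Fin n)) :
    (⨆ x : EuclideanSpace ℝ (Fin n),
        (((inner ℝ y x : ℝ) : EReal)
          - ⨅ u : EuclideanSpace ℝ (Fin m), (Ci u + J (A x + B u))))
      = (⨆ u : EuclideanSpace ℝ (Fin m),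
          (((inner ℝ (-(ContinuousLinearMap.adjoint B
              (ContinuousLinearMap.adjoint (A.symm : EuclideanSpace ℝ (Fin n) →L[ℝ]
                EuclideanSpace ℝ (Fin n)) y))) u : ℝ) : EReal) - Ci u))
        + (⨆ z : EuclideanSpace ℝ (Fin n),
            (((inner ℝ (ContinuousLinearMap.adjoint (A.symm : EuclideanSpace ℝ (Fin n) →L[ℝ]
                EuclideanSpace ℝ (Fin n)) y) z : ℝ) : EReal) - J z)) := by
  set q : EuclideanSpace ℝ (Fin n) :=
    ContinuousLinearMap.adjoint (A.symm : EuclideanSpace ℝ (Fin n) →L[ℝ]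
      EuclideanSpace ℝ (Fin n)) y with hq
  set p : EuclideanSpace ℝ (Fin m) := -(ContinuousLinearMap.adjoint B q) with hp
  have hqz : ∀ z : EuclideanSpace ℝ (Fin n), (inner ℝ q z : ℝ) = inner ℝ y ((A.symm :
      EuclideanSpace ℝ (Fin n) →L[ℝ] EuclideanSpace ℝ (Fin n)) z) := fun z => by
    rw [hq, ContinuousLinearMap.adjoint_inner_left]
  have hpu : ∀ u : EuclideanSpace ℝ (Fin m), (inner ℝ p u : ℝ) = -(inner ℝ q (B u)) := fun u => by
    rw [hp, inner_neg_left, ContinuousLinearMap.adjoint_inner_left]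
  have hin : ∀ (u : EuclideanSpace ℝ (Fin m)) (x : EuclideanSpace ℝ (Fin n)),
      (inner ℝ y x : ℝ) = inner ℝ p u + inner ℝ q (A x + B u) := by
    intro u x
    rw [hpu, inner_add_right, hqz, hqz]
    simp
  have point : ∀ (u : EuclideanSpace ℝ (Fin m)) (x : EuclideanSpace ℝ (Fin n)),
      ((inner ℝ y x : ℝ) : EReal) - (Ci u + J (A x + B u))
        = (((inner ℝ p u : ℝ) : EReal) - Ci u)
          + (((inner ℝ q (A x + B u) : ℝ) : EReal) - J (A x + B u)) := by
    intro u x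
    rw [hin u x]
    exact my_sub_add _ _ _ _ (hCibot u) (hJbot _)
  have hsurj : ∀ u : EuclideanSpace ℝ (Fin m),
      Function.Surjective (fun x : EuclideanSpace ℝ (Fin n) => A x + B u) := by
    intro u z
    exact ⟨A.symm (z - B u), by simp⟩
  calc (⨆ x : EuclideanSpace ℝ (Fin n),
        (((inner ℝ y x : ℝ) : EReal)
          - ⨅ u : EuclideanSpace ℝ (Fin m), (Ci u + J (A x + B u))))
      = ⨆ x, ⨆ u, (((inner ℝ y x : ℝ) : EReal) - (Ci u + J (A x + B u))) := by
        simp_rw [my_sub_iInf]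
    _ = ⨆ u, ⨆ x, (((inner ℝ y x : ℝ) : EReal) - (Ci u + J (A x + B u))) := iSup_comm
    _ = ⨆ u, ⨆ x, ((((inner ℝ p u : ℝ) : EReal) - Ci u)
          + (((inner ℝ q (A x + B u) : ℝ) : EReal) - J (A x + B u))) := by
        simp_rw [point]
    _ = ⨆ u, ⨆ z, ((((inner ℝ p u : ℝ) : EReal) - Ci u)
          + (((inner ℝ q z : ℝ) : EReal) - J z)) := by
        refine iSup_congr fun u => ?_
        exact (hsurj u).iSup_comp
          (g := fun z => (((inner ℝ p u : ℝ) : EReal) - Ci u)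
            + (((inner ℝ q z : ℝ) : EReal) - J z))
    _ = (⨆ u, (((inner ℝ p u : ℝ) : EReal) - Ci u))
          + (⨆ z, (((inner ℝ q z : ℝ) : EReal) - J z)) :=
        (my_iSup_add_iSup _ _).symm
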